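/- For every s ∈ ℂ with Re s > 0 and s ≠ 1, the integral ∫_0^∞ x^{s−1}/(e^x + 1) dx converges absolutely and equals Γ(s) · (1 − 2^{1−s}) · ζ(s), where Γ is the complex Gamma function and ζ is the Riemann zeta function (so that (1 − 2^{1−s})ζ(s) is the Dirichlet eta function η(s)). -/

import Mathlib

open MeasureTheory Complex Filter Set Topology

lemma hasSum_eta {s : ℂ} (hs : 1 < s.re) :
    HasSum (fun n : ℕ => (-1 : ℂ) ^ n * (1 / ((n : ℂ) + 1) ^ s))
      ((1 - (2 : ℂ) ^ (1 - s)) * riemannZeta s) := by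
  have hs0 : s ≠ 0 := fun h => by simp [h] at hs; norm_num at hs
  set f : ℕ → ℂ := fun n => 1 / (n : ℂ) ^ s with hf
  have hsum : Summable f := Complex.summable_one_div_nat_cpow.mpr hs
  have h1 : HasSum f (riemannZeta s) := by
    rw [zeta_eq_tsum_one_div_nat_cpow hs]
    exact hsum.hasSum
  have hdouble : ∀ k : ℕ, f (2 * k) = (2 : ℂ) ^ (-s) * f k := by
    intro k
    rcases Nat.eq_zero_or_pos k with rfl | hk
    · simp [f, zero_cpow hs0]
    · have h2 : ((2 * k : ℕ) : ℂ) ^ s = (2 : ℂ) ^ s * (k : ℂ) ^ s := by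
        push_cast
        rw [show ((2 : ℂ) * (k : ℂ)) = ((2 : ℕ) : ℂ) * ((k : ℕ) : ℂ) by push_cast; ring,
          ← Nat.cast_mul, Nat.cast_mul, natCast_mul_natCast_cpow]
        push_cast; ring
      simp only [f, h2, cpow_neg]
      field_simp
  have h_even : HasSum (fun k => f (2 * k)) ((2 : ℂ) ^ (-s) * riemannZeta s) :=
    (h1.mul_left ((2 : ℂ) ^ (-s))).congr_fun fun k => (hdouble k)
  have hsum_odd : Summable (fun k => f (2 * k + 1)) :=
    hsum.comp_injective fun a b hab => by omega
  have h_odd : HasSum (fun k => f (2 * k + 1))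
      (riemannZeta s - (2 : ℂ) ^ (-s) * riemannZeta s) := by
    have htot := HasSum.even_add_odd h_even hsum_odd.hasSum
    have heq := htot.unique h1
    exact (eq_sub_of_add_eq' heq) ▸ hsum_odd.hasSum
  -- now assemble the alternating series
  have h_odd_shift : HasSum (fun k => f (2 * (k + 1))) ((2 : ℂ) ^ (-s) * riemannZeta s) := by
    have h0 : f (2 * 0) = 0 := by simp [f, zero_cpow hs0]
    have h0' : f 0 = 0 := by simp [f, zero_cpow hs0]
    have := (hasSum_nat_add_iff' (f := fun k => f (2 * k)) 1).mpr h_even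
    simpa [h0'] using this
  have halt := HasSum.even_add_odd (f := fun n => (-1 : ℂ) ^ n * f (n + 1))
    (h_odd.congr_fun ?_) ((h_odd_shift.neg).congr_fun ?_)
  · have h2 : (2 : ℂ) ^ (1 - s) = 2 * (2 : ℂ) ^ (-s) := by
      rw [show (1 : ℂ) - s = 1 + -s by ring, cpow_add _ _ (two_ne_zero), cpow_one]
    have hval : riemannZeta s - (2 : ℂ) ^ (-s) * riemannZeta s + -((2 : ℂ) ^ (-s) * riemannZeta s)
        = (1 - (2 : ℂ) ^ (1 - s)) * riemannZeta s := by rw [h2]; ring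
    refine hval ▸ (halt.congr_fun fun n => ?_)
    simp only [f]
    push_cast
    ring
  · intro k
    show (-1 : ℂ) ^ (2 * k) * f (2 * k + 1) = f (2 * k + 1)
    rw [Even.neg_one_pow ⟨k, by ring⟩, one_mul]
  · intro k
    show (-1 : ℂ) ^ (2 * k + 1) * f (2 * k + 1 + 1) = -f (2 * (k + 1))
    rw [Odd.neg_one_pow ⟨k, by ring⟩, show 2 * k + 1 + 1 = 2 * (k + 1) by ring]
    ring

noncomputable def stmt5Phi : ZMod 2 → ℂ := fun k => if k = 0 then -1 else 1

lemma stmt5Phi_sum : ∑ j, stmt5Phi j = 0 := by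
  show ∑ j : Fin 2, stmt5Phi j = 0
  rw [Fin.sum_univ_two (f := stmt5Phi)]
  show stmt5Phi 0 + stmt5Phi 1 = 0
  norm_num [stmt5Phi]

lemma stmt5Phi_cast (n : ℕ) : stmt5Phi ((n + 1 : ℕ) : ZMod 2) = (-1) ^ n := by
  rcases Nat.even_or_odd n with he | ho
  · have : ¬ ((n + 1 : ℕ) : ZMod 2) = 0 := by
      rw [ZMod.natCast_eq_zero_iff]
      obtain ⟨m, rfl⟩ := he
      omega
    rw [stmt5Phi, if_neg this, he.neg_one_pow]
  · have : ((n + 1 : ℕ) : ZMod 2) = 0 := by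
      rw [ZMod.natCast_eq_zero_iff]
      obtain ⟨m, rfl⟩ := ho
      omega
    rw [stmt5Phi, if_pos this, ho.neg_one_pow]

lemma stmt5_LSeries_eq {s : ℂ} (hs : 1 < s.re) :
    HasSum (fun n : ℕ => (-1 : ℂ) ^ n * (1 / ((n : ℂ) + 1) ^ s))
      (LSeries (fun n : ℕ => stmt5Phi n) s) := by
  have hL : LSeriesSummable (fun n : ℕ => stmt5Phi n) s :=
    ZMod.LSeriesSummable_of_one_lt_re stmt5Phi hs
  have h := (hasSum_nat_add_iff' (f := LSeries.term (fun n : ℕ => stmt5Phi n) s) 1).mpr hL.hasSum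
  simp only [Finset.range_one, Finset.sum_singleton, LSeries.term_zero, sub_zero] at h
  refine h.congr_fun fun n => ?_
  rw [LSeries.term_of_ne_zero (Nat.succ_ne_zero n), stmt5Phi_cast]
  push_cast
  rw [mul_one_div]

noncomputable def stmt5F : ℝ → ℂ := fun t => 1 / ((Real.exp t : ℂ) + 1)

lemma stmt5F_hasSum {t : ℝ} (ht : 0 < t) :
    HasSum (fun n : ℕ => ((-1 : ℂ) ^ n) * (Real.exp (-((n : ℝ) + 1) * t) : ℂ)) (stmt5F t) := by
  have hr : ‖(-(Real.exp (-t) : ℂ))‖ < 1 := by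
    rw [norm_neg, Complex.norm_real, Real.norm_eq_abs, Real.abs_exp]
    exact Real.exp_lt_one_iff.mpr (by linarith)
  have hgeo := (hasSum_geometric_of_norm_lt_one hr).mul_left ((Real.exp (-t) : ℂ))
  have hterm : ∀ n : ℕ, ((-1 : ℂ) ^ n) * (Real.exp (-((n : ℝ) + 1) * t) : ℂ)
      = (Real.exp (-t) : ℂ) * (-(Real.exp (-t) : ℂ)) ^ n := by
    intro n
    rw [neg_pow, show (-((n : ℝ) + 1) * t) = (-t) + n * (-t) by ring, Real.exp_add,
      Real.exp_nat_mul]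
    push_cast
    ring
  have hval : (Real.exp (-t) : ℂ) * (1 - -(Real.exp (-t) : ℂ))⁻¹ = stmt5F t := by
    have hpos : (0 : ℝ) < Real.exp t := Real.exp_pos t
    have hne : (Real.exp t : ℂ) ≠ 0 := by
      simpa using Real.exp_ne_zero t
    have hne1 : (Real.exp t : ℂ) + 1 ≠ 0 := by
      have : ((Real.exp t + 1 : ℝ) : ℂ) ≠ 0 := by
        exact_mod_cast (by positivity : (Real.exp t + 1 : ℝ) ≠ 0)
      simpa using this
    rw [Real.exp_neg]
    push_cast
    rw [stmt5F]
    field_simp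
    rw [sub_neg_eq_add, ← Complex.ofReal_exp, div_self hne1]
  rw [← hval]
  exact hgeo.congr_fun hterm

lemma stmt5_mellin_hasSum {s : ℂ} (hs : 1 < s.re) :
    HasSum (fun n : ℕ => Complex.Gamma s * ((-1 : ℂ) ^ n) / (((n : ℝ) + 1 : ℝ) : ℂ) ^ s)
      (mellin stmt5F s) := by
  refine hasSum_mellin (a := fun n : ℕ => (-1 : ℂ) ^ n) (p := fun n : ℕ => (n : ℝ) + 1)
    (fun n => Or.inr (by positivity)) (by linarith : 0 < s.re) (fun t ht => ?_) ?_
  · exact stmt5F_hasSum ht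
  · simp only [norm_pow, norm_neg, norm_one, one_pow]
    have h1 : Summable (fun n : ℕ => (n : ℝ) ^ (-s.re)) :=
      Real.summable_nat_rpow.mpr (by linarith)
    have h2 : Summable (fun n : ℕ => ((n + 1 : ℕ) : ℝ) ^ (-s.re)) :=
      (summable_nat_add_iff 1).mpr h1
    refine h2.congr fun n => ?_
    push_cast
    rw [Real.rpow_neg (by positivity), one_div]


lemma stmt5F_ne (t : ℝ) : ((Real.exp t : ℂ) + 1) ≠ 0 := by
  have : ((Real.exp t + 1 : ℝ) : ℂ) ≠ 0 := by
    exact_mod_cast (by positivity : (Real.exp t + 1 : ℝ) ≠ 0)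
  simpa using this

lemma stmt5F_norm (t : ℝ) : ‖stmt5F t‖ = 1 / (Real.exp t + 1) := by
  rw [stmt5F, norm_div, norm_one]
  congr 1
  rw [show ((Real.exp t : ℂ) + 1) = ((Real.exp t + 1 : ℝ) : ℂ) by push_cast; ring,
    Complex.norm_real, Real.norm_eq_abs, abs_of_pos (by positivity)]

lemma stmt5F_continuous : Continuous stmt5F :=
  continuous_const.div (by continuity) stmt5F_ne

lemma stmt5_mellin_differentiableAt {s : ℂ} (hs : 0 < s.re) :
    DifferentiableAt ℂ (mellin stmt5F) s := by
  refine mellin_differentiableAt_of_isBigO_rpow_exp one_pos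
    (stmt5F_continuous.locallyIntegrable.locallyIntegrableOn _) ?_ (b := 0) ?_ hs
  · refine Asymptotics.IsBigO.of_bound 1 (Filter.Eventually.of_forall fun t => ?_)
    rw [stmt5F_norm, one_mul, Real.norm_eq_abs, Real.abs_exp, neg_one_mul]
    rw [div_le_iff₀ (by positivity)]
    have h1 : Real.exp (-t) * Real.exp t = 1 := by rw [← Real.exp_add]; simp
    nlinarith [Real.exp_pos (-t)]
  · refine Asymptotics.IsBigO.of_bound 1 ?_
    filter_upwards [self_mem_nhdsWithin] with t (ht : 0 < t)
    rw [stmt5F_norm, one_mul, neg_zero, Real.rpow_zero, Real.norm_eq_abs, abs_one]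
    rw [div_le_one (by positivity)]
    nlinarith [Real.exp_pos t]

lemma stmt5_mellin_eq_of_one_lt {s : ℂ} (hs : 1 < s.re) :
    mellin stmt5F s = Complex.Gamma s * (LSeries (fun n : ℕ => stmt5Phi n) s) := by
  have h1 := stmt5_mellin_hasSum hs
  have h2 := (stmt5_LSeries_eq hs).mul_left (Complex.Gamma s)
  refine h1.unique (h2.congr_fun fun n => ?_)
  push_cast
  rw [mul_one_div, mul_div_assoc]

lemma stmt5_eta_eq_of_one_lt {s : ℂ} (hs : 1 < s.re) :
    LSeries (fun n : ℕ => stmt5Phi n) s = (1 - (2 : ℂ) ^ (1 - s)) * riemannZeta s :=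
  (stmt5_LSeries_eq hs).unique (hasSum_eta hs)

lemma stmt5_LFunction_eq {s : ℂ} (hs1 : s ≠ 1) :
    ZMod.LFunction stmt5Phi s = (1 - (2 : ℂ) ^ (1 - s)) * riemannZeta s := by
  let U : Set ℂ := {1}ᶜ
  have hUo : IsOpen U := isOpen_compl_singleton
  have hf : AnalyticOnNhd ℂ (ZMod.LFunction stmt5Phi) U :=
    DifferentiableOn.analyticOnNhd
      (fun u _ => (ZMod.differentiable_LFunction_of_sum_zero stmt5Phi_sum u).differentiableWithinAt)
      hUo
  have hg : AnalyticOnNhd ℂ (fun z => (1 - (2 : ℂ) ^ (1 - z)) * riemannZeta z) U := by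
    refine DifferentiableOn.analyticOnNhd (fun u hu => DifferentiableAt.differentiableWithinAt ?_) hUo
    refine DifferentiableAt.mul ?_ (differentiableAt_riemannZeta hu)
    exact (differentiableAt_const _).sub
      (((differentiableAt_const (1 : ℂ)).sub differentiableAt_id).const_cpow (Or.inl two_ne_zero))
  have hUc : IsPreconnected U :=
    (isConnected_compl_singleton_of_one_lt_rank (by simp) _).isPreconnected
  have hV : {z : ℂ | 1 < z.re} ∈ 𝓝 (2 : ℂ) :=
    (continuous_re.isOpen_preimage _ isOpen_Ioi).mem_nhds (by norm_num)
  refine hf.eqOn_of_preconnected_of_eventuallyEq hg hUc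
    (by simp only [U, mem_compl_iff, mem_singleton_iff]; norm_num : (2:ℂ) ∈ U) ?_ hs1
  filter_upwards [hV] with z hz
  rw [ZMod.LFunction_eq_LSeries stmt5Phi hz, stmt5_eta_eq_of_one_lt hz]

lemma stmt5_mellin_eq {s : ℂ} (hs : 0 < s.re) :
    mellin stmt5F s = Complex.Gamma s * ZMod.LFunction stmt5Phi s := by
  let U : Set ℂ := {z : ℂ | 0 < z.re}
  have hUo : IsOpen U := continuous_re.isOpen_preimage _ isOpen_Ioi
  have hf : AnalyticOnNhd ℂ (mellin stmt5F) U :=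
    DifferentiableOn.analyticOnNhd
      (fun u hu => (stmt5_mellin_differentiableAt hu).differentiableWithinAt) hUo
  have hg : AnalyticOnNhd ℂ (fun z => Complex.Gamma z * ZMod.LFunction stmt5Phi z) U := by
    refine DifferentiableOn.analyticOnNhd (fun u hu => DifferentiableAt.differentiableWithinAt ?_) hUo
    refine DifferentiableAt.mul (Complex.differentiableAt_Gamma u fun m hm => ?_)
      (ZMod.differentiable_LFunction_of_sum_zero stmt5Phi_sum u)
    rw [hm] at hu
    simp only [U, mem_setOf_eq, neg_re, natCast_re, neg_pos] at hu
    exact absurd hu (Nat.cast_nonneg m).not_gt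
  have hUc : IsPreconnected U := (convex_halfSpace_re_gt 0).isPreconnected
  have hV : {z : ℂ | 1 < z.re} ∈ 𝓝 (2 : ℂ) :=
    (continuous_re.isOpen_preimage _ isOpen_Ioi).mem_nhds (by norm_num)
  refine hf.eqOn_of_preconnected_of_eventuallyEq hg hUc
    (by simp only [U, mem_setOf_eq]; norm_num : (2:ℂ) ∈ U) ?_ hs
  filter_upwards [hV] with z hz
  rw [stmt5_mellin_eq_of_one_lt hz, ZMod.LFunction_eq_LSeries stmt5Phi hz]

/-- For `Re s > 0`, `s ≠ 1`, `∫_0^∞ x^{s−1}/(e^x + 1) dx` converges absolutely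
and equals `Γ(s) (1 − 2^{1−s}) ζ(s)`, i.e. `Γ(s) η(s)` with `η` the Dirichlet eta function. -/
theorem stmt5 (s : ℂ) (hs : 0 < s.re) (hs1 : s ≠ 1) :
    IntegrableOn (fun x : ℝ => (x : ℂ) ^ (s - 1) / ((Real.exp x : ℂ) + 1)) (Set.Ioi 0) ∧
    ∫ x in Set.Ioi (0 : ℝ), (x : ℂ) ^ (s - 1) / ((Real.exp x : ℂ) + 1)
      = Complex.Gamma s * (1 - (2 : ℂ) ^ (1 - s)) * riemannZeta s := by
  have hint : IntegrableOn (fun x : ℝ => (x : ℂ) ^ (s - 1) / ((Real.exp x : ℂ) + 1))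
      (Set.Ioi 0) := by
    have hmaj := Complex.GammaIntegral_convergent hs
    refine Integrable.mono hmaj ?_ ?_
    · refine ContinuousOn.aestronglyMeasurable ?_ measurableSet_Ioi
      refine ContinuousOn.div ?_ (Continuous.continuousOn (by continuity)) fun x _ => stmt5F_ne x
      apply continuousOn_of_forall_continuousAt
      intro x hx
      have : ContinuousAt (fun x : ℂ => x ^ (s - 1)) ↑x :=
        continuousAt_cpow_const <| ofReal_mem_slitPlane.2 hx
      exact ContinuousAt.comp this continuous_ofReal.continuousAt
    · filter_upwards [ae_restrict_mem measurableSet_Ioi] with x (hx : 0 < x)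
      have hnorm : ‖((Real.exp x : ℂ) + 1)‖ = Real.exp x + 1 := by
        rw [show ((Real.exp x : ℂ) + 1) = ((Real.exp x + 1 : ℝ) : ℂ) by push_cast; ring,
          Complex.norm_real, Real.norm_eq_abs, abs_of_pos (by positivity)]
      have hexp : ‖(((-x).exp : ℝ) : ℂ)‖ = Real.exp (-x) := by
        rw [Complex.norm_real, Real.norm_eq_abs, Real.abs_exp]
      rw [norm_div, hnorm, norm_mul, hexp]
      have hb : 1 / (Real.exp x + 1) ≤ Real.exp (-x) := by
        rw [div_le_iff₀ (by positivity)]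
        have h1 : Real.exp (-x) * Real.exp x = 1 := by rw [← Real.exp_add]; simp
        nlinarith [Real.exp_pos (-x)]
      calc ‖(x : ℂ) ^ (s - 1)‖ / (Real.exp x + 1)
          = ‖(x : ℂ) ^ (s - 1)‖ * (1 / (Real.exp x + 1)) := by ring
        _ ≤ ‖(x : ℂ) ^ (s - 1)‖ * Real.exp (-x) :=
            mul_le_mul_of_nonneg_left hb (norm_nonneg _)
        _ = Real.exp (-x) * ‖(x : ℂ) ^ (s - 1)‖ := mul_comm _ _
  refine ⟨hint, ?_⟩
  have hm : mellin stmt5F s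
      = ∫ x in Set.Ioi (0 : ℝ), (x : ℂ) ^ (s - 1) / ((Real.exp x : ℂ) + 1) := by
    simp only [mellin, smul_eq_mul, stmt5F, mul_one_div]
  rw [← hm, stmt5_mellin_eq hs, stmt5_LFunction_eq hs1, mul_assoc]
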